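/- Let G be a finite simple graph with N vertices and M edges, let A be its adjacency matrix over ℝ (a real symmetric matrix), and let λ_1, …, λ_N be the eigenvalues of A counted with multiplicity. Then the graph energy satisfies the McClelland bound E(G) = Σ_{i=1}^{N} |λ_i| ≤ √(2·M·N). -/

import Mathlib

lemma trace_sq_eq_sum_sq {n : Type*} [Fintype n] [DecidableEq n]
    {A : Matrix n n ℝ} (hA : A.IsHermitian) :
    (A * A).trace = ∑ i, hA.eigenvalues i ^ 2 := by
  conv_lhs => rw [hA.spectral_theorem, Unitary.conjStarAlgAut_apply]
  set U := (hA.eigenvectorUnitary : Matrix n n ℝ)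
  have hU : star U * U = 1 := Unitary.coe_star_mul_self hA.eigenvectorUnitary
  have : (U * Matrix.diagonal (RCLike.ofReal ∘ hA.eigenvalues) * star U) *
      (U * Matrix.diagonal (RCLike.ofReal ∘ hA.eigenvalues) * star U)
      = U * (Matrix.diagonal (RCLike.ofReal ∘ hA.eigenvalues) *
        Matrix.diagonal (RCLike.ofReal ∘ hA.eigenvalues)) * star U := by
    simp only [Matrix.mul_assoc]
    rw [← Matrix.mul_assoc (star U) U, hU, Matrix.one_mul]
  rw [this, Matrix.trace_mul_comm, ← Matrix.mul_assoc, hU, Matrix.one_mul,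
    Matrix.diagonal_mul_diagonal, Matrix.trace_diagonal]
  simp [sq]

/-- **McClelland bound.** For a finite simple graph `G` with `N` vertices and
`M` edges, with real symmetric adjacency matrix `A` and eigenvalues `λ₁, …, λ_N` (counted
with multiplicity), the graph energy satisfies `E(G) = ∑ i, |λ i| ≤ √(2·M·N)`. -/
theorem stmt_13 {V : Type*} [Fintype V] [DecidableEq V]
    (G : SimpleGraph V) [DecidableRel G.Adj]
    (hA : (G.adjMatrix ℝ).IsHermitian) :
    ∑ i, |hA.eigenvalues i| ≤
      Real.sqrt (2 * (G.edgeFinset.card : ℝ) * (Fintype.card V : ℝ)) := by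
  have htr : (G.adjMatrix ℝ * G.adjMatrix ℝ).trace = 2 * (G.edgeFinset.card : ℝ) := by
    rw [Matrix.trace]
    simp only [Matrix.diag_apply, SimpleGraph.adjMatrix_mul_self_apply_self]
    rw [← Nat.cast_sum]
    norm_cast
    rw [SimpleGraph.sum_degrees_eq_twice_card_edges]
  have hsum : ∑ i, hA.eigenvalues i ^ 2 = 2 * (G.edgeFinset.card : ℝ) := by
    rw [← trace_sq_eq_sum_sq hA, htr]
  have h1 : (∑ i, |hA.eigenvalues i|) ^ 2 ≤
      (Fintype.card V : ℝ) * (2 * (G.edgeFinset.card : ℝ)) := by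
    calc (∑ i, |hA.eigenvalues i|) ^ 2
        ≤ (Finset.univ.card : ℝ) * ∑ i, |hA.eigenvalues i| ^ 2 :=
          sq_sum_le_card_mul_sum_sq
      _ = (Fintype.card V : ℝ) * (2 * (G.edgeFinset.card : ℝ)) := by
          simp only [sq_abs, hsum, Finset.card_univ]
  have hnn : 0 ≤ ∑ i, |hA.eigenvalues i| := Finset.sum_nonneg fun i _ => abs_nonneg _
  rw [show 2 * (G.edgeFinset.card : ℝ) * (Fintype.card V : ℝ)
      = (Fintype.card V : ℝ) * (2 * (G.edgeFinset.card : ℝ)) by ring]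
  exact (Real.le_sqrt hnn (by positivity)).mpr h1
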